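/- Let S be a semicopula. If for all measurable spaces (X,𝒜), all capacities μ, all measurable f, and all a ∈ [0,1], I_S(μ, S(a,f)) = S(a, I_S(μ,f)) holds, then S is associative and, for each a ∈ (0,1), x ↦ S(a,x) is continuous on [0,1]. -/

import Mathlib

open unitInterval Set Filter Topology

instance : Fact ((0:ℝ) ≤ 1) := ⟨zero_le_one⟩

/-- A semicopula: nondecreasing in each coordinate, neutral element 1. -/
def IsSemicopula (S : I → I → I) : Prop :=
  (∀ x, S x 1 = x) ∧ (∀ x, S 1 x = x) ∧
  (∀ y, Monotone fun x => S x y) ∧ (∀ x, Monotone fun y => S x y)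

/-- A capacity: monotone set function with value 0 at ∅ and 1 at univ. -/
def IsCapacity {X : Type} [MeasurableSpace X] (μ : Set X → I) : Prop :=
  (∀ A B : Set X, MeasurableSet A → MeasurableSet B → A ⊆ B → μ A ≤ μ B) ∧
  μ (∅ : Set X) = 0 ∧ μ (univ : Set X) = 1

/-- The generalized Sugeno (seminormed fuzzy) integral. -/
noncomputable def sugeno {X : Type} [MeasurableSpace X] (S : I → I → I)
    (μ : Set X → I) (f : X → I) : I :=
  ⨆ t : I, S t (μ {x | t ≤ f x})

open Classical in
/-- Capacity on `Bool` with value `p` on `{true}`. -/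
noncomputable def muBool (p : I) : Set Bool → I :=
  fun A => if false ∈ A then 1 else if true ∈ A then p else 0

open Classical in
/-- Capacity on `I` detecting sets containing some interval `[y, c)`. -/
noncomputable def muIco (c : I) : Set I → I :=
  fun A => if ∃ y, y < c ∧ Ico y c ⊆ A then 1 else 0

open Classical in
/-- Capacity on `I` detecting sets containing `(c, 1]`. -/
noncomputable def muIoi (c : I) : Set I → I :=
  fun A => if Ioi c ⊆ A then 1 else 0

open Classical in
lemma muBool_false {p : I} {A : Set Bool} (h : false ∈ A) : muBool p A = 1 := by
  simp only [muBool, if_pos h]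

open Classical in
lemma muBool_true {p : I} {A : Set Bool} (hf : false ∉ A) (ht : true ∈ A) :
    muBool p A = p := by
  simp only [muBool, if_neg hf, if_pos ht]

open Classical in
lemma muBool_none {p : I} {A : Set Bool} (hf : false ∉ A) (ht : true ∉ A) :
    muBool p A = 0 := by
  simp only [muBool, if_neg hf, if_neg ht]

open Classical in
lemma muIco_pos {c : I} {A : Set I} (h : ∃ y, y < c ∧ Ico y c ⊆ A) : muIco c A = 1 := by
  simp only [muIco, if_pos h]

open Classical in
lemma muIco_neg {c : I} {A : Set I} (h : ¬ ∃ y, y < c ∧ Ico y c ⊆ A) : muIco c A = 0 := by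
  simp only [muIco, if_neg h]

open Classical in
lemma muIoi_pos {c : I} {A : Set I} (h : Ioi c ⊆ A) : muIoi c A = 1 := by
  simp only [muIoi, if_pos h]

open Classical in
lemma muIoi_neg {c : I} {A : Set I} (h : ¬ Ioi c ⊆ A) : muIoi c A = 0 := by
  simp only [muIoi, if_neg h]

lemma muBool_capacity (p : I) : IsCapacity (muBool p) := by
  refine ⟨?_, ?_, ?_⟩
  · intro A B _ _ hAB
    by_cases hfA : false ∈ A
    · rw [muBool_false hfA, muBool_false (hAB hfA)]
    · by_cases htA : true ∈ A
      · have htB : true ∈ B := hAB htA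
        by_cases hfB : false ∈ B
        · rw [muBool_true hfA htA, muBool_false hfB]
          exact le_one'
        · rw [muBool_true hfA htA, muBool_true hfB htB]
      · rw [muBool_none hfA htA]
        exact nonneg'
  · rw [muBool_none (notMem_empty _) (notMem_empty _)]
  · rw [muBool_false (mem_univ _)]

lemma muIco_capacity (c : I) (hc : 0 < c) : @IsCapacity I ⊤ (muIco c) := by
  refine ⟨?_, ?_, ?_⟩
  · intro A B _ _ hAB
    by_cases hA : ∃ y, y < c ∧ Ico y c ⊆ A
    · obtain ⟨y, hyc, hsub⟩ := hA
      rw [muIco_pos ⟨y, hyc, hsub⟩, muIco_pos ⟨y, hyc, hsub.trans hAB⟩]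
    · rw [muIco_neg hA]
      exact nonneg'
  · refine muIco_neg ?_
    rintro ⟨y, hyc, hsub⟩
    exact hsub ⟨le_refl y, hyc⟩
  · exact muIco_pos ⟨0, hc, subset_univ _⟩

lemma muIoi_capacity (c : I) (hc : c < 1) : @IsCapacity I ⊤ (muIoi c) := by
  refine ⟨?_, ?_, ?_⟩
  · intro A B _ _ hAB
    by_cases hA : Ioi c ⊆ A
    · rw [muIoi_pos hA, muIoi_pos (hA.trans hAB)]
    · rw [muIoi_neg hA]
      exact nonneg'
  · refine muIoi_neg fun h => ?_
    exact h hc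
  · exact muIoi_pos (subset_univ _)

lemma sugenoBool {S : I → I → I} (hS : IsSemicopula S) (b p : I) :
    sugeno S (muBool p) (fun x => if x then b else 0) = S b p := by
  obtain ⟨h1, h1', hm1, hm2⟩ := hS
  have hx0 : ∀ x, S x 0 = 0 := fun x =>
    le_antisymm ((hm1 0 (le_one' (t := x))).trans_eq (h1' 0)) nonneg'
  have h0p : S 0 p = 0 :=
    le_antisymm ((hm2 0 (le_one' (t := p))).trans_eq (h1 0)) nonneg'
  apply le_antisymm
  · apply iSup_le
    intro t
    by_cases ht0 : t = 0
    · subst ht0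
      have hA : false ∈ {x : Bool | (0:I) ≤ (if x then b else 0)} := by
        simp only [mem_setOf_eq, if_neg Bool.false_ne_true]
        exact le_refl 0
      rw [muBool_false hA, h1]
      exact nonneg'
    · have hf : false ∉ {x : Bool | t ≤ (if x then b else 0)} := by
        simp only [mem_setOf_eq, if_neg Bool.false_ne_true]
        intro h
        exact ht0 (le_antisymm h nonneg')
      by_cases htb : t ≤ b
      · have htt : true ∈ {x : Bool | t ≤ (if x then b else 0)} := by
          simpa [mem_setOf_eq] using htb
        rw [muBool_true hf htt]
        exact hm1 p htb
      · have htt : true ∉ {x : Bool | t ≤ (if x then b else 0)} := by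
          simpa [mem_setOf_eq] using htb
        rw [muBool_none hf htt, hx0]
        exact nonneg'
  · by_cases hb0 : b = 0
    · subst hb0
      rw [h0p]
      exact nonneg'
    · refine le_iSup_of_le b ?_
      have hf : false ∉ {x : Bool | b ≤ (if x then b else 0)} := by
        simp only [mem_setOf_eq, if_neg Bool.false_ne_true]
        intro h
        exact hb0 (le_antisymm h nonneg')
      have htt : true ∈ {x : Bool | b ≤ (if x then b else 0)} := by
        simp [mem_setOf_eq]
      rw [muBool_true hf htt]

theorem prop_implies_assoc_and_cont (S : I → I → I) (hS : IsSemicopula S)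
    (hprop : ∀ (X : Type) [MeasurableSpace X] (μ : Set X → I) (f : X → I),
      IsCapacity μ → Measurable f → ∀ a : I,
        sugeno S μ (fun x => S a (f x)) = S a (sugeno S μ f)) :
    (∀ x y z : I, S (S x y) z = S x (S y z)) ∧
    (∀ a : I, 0 < a → a < 1 → Continuous fun x => S a x) := by
  obtain ⟨h1, h1', hm1, hm2⟩ := hS
  have hSc : IsSemicopula S := ⟨h1, h1', hm1, hm2⟩
  have hx0 : ∀ x, S x 0 = 0 := fun x =>
    le_antisymm ((hm1 0 (le_one' (t := x))).trans_eq (h1' 0)) nonneg'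
  -- Associativity
  have hassoc : ∀ x y z : I, S (S x y) z = S x (S y z) := by
    intro a b p
    have key := hprop Bool (muBool p) (fun x => if x then b else 0)
      (muBool_capacity p) (measurable_of_countable _) a
    beta_reduce at key
    rw [sugenoBool hSc b p] at key
    have hfun : (fun x : Bool => S a (if x then b else 0))
        = fun x : Bool => if x then S a b else 0 := by
      funext x
      cases x <;> simp [hx0]
    rw [hfun, sugenoBool hSc (S a b) p] at key
    exact key
  refine ⟨hassoc, ?_⟩
  -- Left continuity values
  have hLval : ∀ a c : I, 0 < c → S a c ≤ sSup (S a '' Iio c) := by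
    intro a c hc
    by_contra hlt
    push_neg at hlt
    have key := @hprop I ⊤ (muIco c) (fun x => x) (muIco_capacity c hc)
      measurable_from_top a
    beta_reduce at key
    have comp1 : @sugeno I ⊤ S (muIco c) (fun x => x) = c := by
      apply le_antisymm
      · apply iSup_le
        intro t
        beta_reduce
        by_cases htc : t < c
        · rw [muIco_pos (A := {x : I | t ≤ x}) ⟨t, htc, fun x hx => hx.1⟩, h1]
          exact le_of_lt htc
        · have hcond : ¬ ∃ y, y < c ∧ Ico y c ⊆ {x : I | t ≤ x} := by
            rintro ⟨y, hyc, hsub⟩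
            exact htc (lt_of_le_of_lt (hsub ⟨le_refl y, hyc⟩) hyc)
          rw [muIco_neg hcond, hx0]
          exact nonneg'
      · by_contra hcon
        push_neg at hcon
        obtain ⟨u, hu1, hu2⟩ := exists_between hcon
        have hterm : u ≤ @sugeno I ⊤ S (muIco c) (fun x => x) := by
          refine le_iSup_of_le u ?_
          beta_reduce
          rw [muIco_pos (A := {x : I | u ≤ x}) ⟨u, hu2, fun x hx => hx.1⟩, h1]
        exact absurd (hterm.trans_lt hu1) (lt_irrefl u)
    have comp2 : @sugeno I ⊤ S (muIco c) (fun x => S a x) ≤ sSup (S a '' Iio c) := by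
      apply iSup_le
      intro t
      beta_reduce
      by_cases hcond : ∃ y, y < c ∧ Ico y c ⊆ {x : I | t ≤ S a x}
      · obtain ⟨y, hyc, hsub⟩ := hcond
        have hty : t ≤ S a y := hsub ⟨le_refl y, hyc⟩
        have hyM : S a y ≤ sSup (S a '' Iio c) := le_sSup ⟨y, hyc, rfl⟩
        rw [muIco_pos (A := {x : I | t ≤ S a x}) ⟨y, hyc, hsub⟩, h1]
        exact hty.trans hyM
      · rw [muIco_neg hcond, hx0]
        exact nonneg'
    rw [comp1] at key
    rw [key] at comp2
    exact absurd (lt_of_le_of_lt comp2 hlt) (lt_irrefl _)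
  -- Right continuity values
  have hRval : ∀ a c : I, c < 1 → sInf (S a '' Ioi c) ≤ S a c := by
    intro a c hc
    by_contra hlt
    push_neg at hlt
    have key := @hprop I ⊤ (muIoi c) (fun x => x) (muIoi_capacity c hc)
      measurable_from_top a
    beta_reduce at key
    have comp1 : @sugeno I ⊤ S (muIoi c) (fun x => x) = c := by
      apply le_antisymm
      · apply iSup_le
        intro t
        beta_reduce
        by_cases htc : t ≤ c
        · rw [muIoi_pos (A := {x : I | t ≤ x}) (fun x hx => htc.trans (le_of_lt hx)), h1]
          exact htc
        · push_neg at htc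
          have hcond : ¬ Ioi c ⊆ {x : I | t ≤ x} := by
            intro h
            obtain ⟨u, hu1, hu2⟩ := exists_between htc
            exact absurd (h hu1) (not_le.mpr hu2)
          rw [muIoi_neg hcond, hx0]
          exact nonneg'
      · refine le_iSup_of_le c ?_
        beta_reduce
        rw [muIoi_pos (A := {x : I | c ≤ x}) (fun x hx => show c ≤ x from le_of_lt hx), h1]
    have comp2 : sInf (S a '' Ioi c) ≤ @sugeno I ⊤ S (muIoi c) (fun x => S a x) := by
      refine le_iSup_of_le (sInf (S a '' Ioi c)) ?_
      beta_reduce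
      have hcond : Ioi c ⊆ {x : I | sInf (S a '' Ioi c) ≤ S a x} := by
        intro x hx
        show sInf (S a '' Ioi c) ≤ S a x
        exact sInf_le (mem_image_of_mem _ hx)
      rw [muIoi_pos hcond, h1]
    rw [comp1] at key
    rw [key] at comp2
    exact absurd (hlt.trans_le comp2) (lt_irrefl _)
  -- Continuity
  intro a _ _
  rw [continuous_iff_continuousAt]
  intro c
  rw [ContinuousAt]
  rw [tendsto_order]
  constructor
  · intro b hb
    rcases eq_or_lt_of_le (nonneg' (t := c)) with hc0 | hc0
    · refine Eventually.of_forall fun x => ?_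
      refine hb.trans_le (hm2 a ?_)
      rw [← hc0]
      exact nonneg'
    · have hb' : b < sSup (S a '' Iio c) := hb.trans_le (hLval a c hc0)
      obtain ⟨_, ⟨y, hyc, rfl⟩, hby⟩ := lt_sSup_iff.mp hb'
      filter_upwards [Ioi_mem_nhds hyc] with x hx
      exact hby.trans_le (hm2 a (le_of_lt hx))
  · intro b hb
    rcases eq_or_lt_of_le (le_one' (t := c)) with hc1 | hc1
    · refine Eventually.of_forall fun x => ?_
      refine lt_of_le_of_lt (hm2 a ?_) hb
      rw [hc1]
      exact le_one'
    · have hb' : sInf (S a '' Ioi c) < b := (hRval a c hc1).trans_lt hb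
      obtain ⟨_, ⟨y, hyc, rfl⟩, hby⟩ := sInf_lt_iff.mp hb'
      filter_upwards [Iio_mem_nhds hyc] with x hx
      exact lt_of_le_of_lt (hm2 a (le_of_lt hx)) hby
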